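/- Let u be a monotone game, ε > 0, C₁ = {i ∈ N : c(u, i) = 1}, and let u^ε be the perturbed game defined by u^ε(S) = u(S) + ε if S ∩ C₁ ≠ ∅ and u^ε(S) = u(S) otherwise. Then u^ε is a monotone game and c(u, i) = c(u^ε, i) for every agent i. -/

import Mathlib

open Finset
open scoped Classical

/-- A monotone game on agent set `Fin n`: `u ∅ = 0` and `u` is monotone w.r.t. inclusion. -/
def IsMonotoneGame (n : ℕ) (u : Finset (Fin n) → ℝ) : Prop :=
  u ∅ = 0 ∧ ∀ S T : Finset (Fin n), S ⊆ T → u S ≤ u T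

/-- The contribution indicator: `c(u,i) = 0` if `u (S ∪ {i}) = u S` for every `S`,
and `c(u,i) = 1` otherwise. -/
noncomputable def contrib {n : ℕ} (u : Finset (Fin n) → ℝ) (i : Fin n) : ℝ :=
  if ∀ S : Finset (Fin n), u (insert i S) = u S then 0 else 1

/-- The set `C₁` of agents with contribution indicator `1`. -/
noncomputable def C1 {n : ℕ} (u : Finset (Fin n) → ℝ) : Finset (Fin n) :=
  Finset.univ.filter fun i => contrib u i = 1

/-- The perturbed game `u^ε`: `u^ε S = u S + ε` if `S ∩ C₁ ≠ ∅`, and `u^ε S = u S`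
otherwise. -/
noncomputable def perturb {n : ℕ} (u : Finset (Fin n) → ℝ) (ε : ℝ) :
    Finset (Fin n) → ℝ :=
  fun S => if (S ∩ C1 u).Nonempty then u S + ε else u S

/-- The average participation solution, with weight `w = 1 / (2 ^ n - 1)`. -/
noncomputable def AP {n : ℕ} (u : Finset (Fin n) → ℝ) (i : Fin n) : ℝ :=
  ∑ S ∈ (Finset.univ.erase i).powerset,
    (1 / (2 ^ n - 1 : ℝ)) * (contrib u i / ((∑ j ∈ S, contrib u j) + 1)) * u (insert i S)

/-- The perturbed game `u^ε` is a monotone game with the same contribution indicators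
as `u`. -/
theorem perturb_monotone_and_same_contrib (n : ℕ) (hn : 1 ≤ n)
    (u : Finset (Fin n) → ℝ) (hu : IsMonotoneGame n u) (ε : ℝ) (hε : 0 < ε) :
    IsMonotoneGame n (perturb u ε) ∧
    ∀ i : Fin n, contrib u i = contrib (perturb u ε) i := by
  obtain ⟨h0, hmono⟩ := hu
  constructor
  · constructor
    · simp [perturb, h0]
    · intro S T hST
      unfold perturb
      by_cases hS : (S ∩ C1 u).Nonempty
      · have hT : (T ∩ C1 u).Nonempty :=
          hS.mono (Finset.inter_subset_inter hST (le_refl _))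
        simp [hS, hT]
        linarith [hmono S T hST]
      · by_cases hT : (T ∩ C1 u).Nonempty
        · simp [hS, hT]
          linarith [hmono S T hST]
        · simp [hS, hT]
          exact hmono S T hST
  · intro i
    unfold contrib
    by_cases h : ∀ S : Finset (Fin n), u (insert i S) = u S
    · have hi : i ∉ C1 u := by
        simp [C1, contrib, h]
      have key : ∀ S : Finset (Fin n), (insert i S ∩ C1 u) = S ∩ C1 u := by
        intro S
        ext j
        simp only [Finset.mem_inter, Finset.mem_insert]
        constructor
        · rintro ⟨hj | hj, hj2⟩
          · exact absurd (hj ▸ hj2) hi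
          · exact ⟨hj, hj2⟩
        · rintro ⟨hj, hj2⟩; exact ⟨Or.inr hj, hj2⟩
      have : ∀ S : Finset (Fin n), perturb u ε (insert i S) = perturb u ε S := by
        intro S
        unfold perturb
        rw [key S, h S]
      simp [h, this]
    · have hi : i ∈ C1 u := by
        rw [C1, Finset.mem_filter]
        simp only [Finset.mem_univ, true_and, contrib, if_neg h]
      push_neg at h
      obtain ⟨S, hS⟩ := h
      have hne : ¬ ∀ T : Finset (Fin n), perturb u ε (insert i T) = perturb u ε T := by
        intro hall
        have := hall S
        unfold perturb at this
        have hins : ((insert i S) ∩ C1 u).Nonempty :=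
          ⟨i, Finset.mem_inter.mpr ⟨Finset.mem_insert_self i S, hi⟩⟩
        by_cases hS2 : (S ∩ C1 u).Nonempty
        · simp [hins, hS2] at this
          exact hS this
        · simp [hins, hS2] at this
          have := hmono S (insert i S) (Finset.subset_insert i S)
          linarith
      rw [if_neg (by push_neg; exact ⟨S, hS⟩), if_neg hne]
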